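/- Let Σ be a d×d real matrix, b₀ : ℝ^d → ℝ^d any map, and for f ∈ C²(ℝ^d) define 𝓛f(x) := (1/2)trace(ΣΣᵀ∇²f(x)) + b₀(x)·∇f(x). Suppose ψ ∈ C²(ℝ^d) and there exist constants κ̃₁, κ̃₂, R₀ > 0 such that 𝓛ψ(x) ≤ −κ̃₁|x|² for all |x| ≥ R₀ and |∇ψ(x)| ≤ κ̃₂(1+|x|) for all x ∈ ℝ^d. Then there exist a > 0, κ̃₃ > 0 and R₁ ≥ R₀ such that 𝓛(e^{aψ})(x) ≤ −κ̃₃|x|² e^{aψ(x)} for all |x| ≥ R₁. -/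

import Mathlib

set_option autoImplicit false

open Matrix Set

noncomputable section

abbrev EucSp (d : ℕ) := EuclideanSpace ℝ (Fin d)

/-- First partial derivative `∂f/∂xᵢ`. -/
noncomputable def pd1 {d : ℕ} (f : EucSp d → ℝ) (i : Fin d) (x : EucSp d) : ℝ :=
  fderiv ℝ f x (EuclideanSpace.single i 1)

/-- Second partial derivative `∂²f/∂xᵢ∂xⱼ`. -/
noncomputable def pd2 {d : ℕ} (f : EucSp d → ℝ) (i j : Fin d) (x : EucSp d) : ℝ :=
  fderiv ℝ (fun y => fderiv ℝ f y (EuclideanSpace.single j 1)) x (EuclideanSpace.single i 1)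

/-- Generator `𝓛f(x) = (1/2)trace(ΣΣᵀ∇²f(x)) + b₀(x)·∇f(x)` with constant diffusion matrix. -/
noncomputable def Lc {d : ℕ} (Sm : Matrix (Fin d) (Fin d) ℝ) (b₀ : EucSp d → EucSp d)
    (f : EucSp d → ℝ) (x : EucSp d) : ℝ :=
  (1/2) * ∑ i, ∑ j, (Sm * Smᵀ) i j * pd2 f i j x + ∑ i, b₀ x i * pd1 f i x

lemma hasF {d : ℕ} {ψ : EucSp d → ℝ} (hψ : ContDiff ℝ 2 ψ) (a : ℝ) (x : EucSp d) :
    HasFDerivAt (fun y => Real.exp (a * ψ y))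
    (Real.exp (a * ψ x) • (a • fderiv ℝ ψ x)) x := by
  have h1 : HasFDerivAt (fun y => a * ψ y) (a • fderiv ℝ ψ x) x :=
    ((hψ.differentiable (by norm_num) x).hasFDerivAt).const_mul a
  exact h1.exp

lemma pd1_exp {d : ℕ} {ψ : EucSp d → ℝ} (hψ : ContDiff ℝ 2 ψ) (a : ℝ) (i : Fin d) (x : EucSp d) :
    pd1 (fun y => Real.exp (a * ψ y)) i x = a * Real.exp (a * ψ x) * pd1 ψ i x := by
  unfold pd1
  rw [(hasF hψ a x).fderiv]
  simp only [ContinuousLinearMap.smul_apply, smul_eq_mul]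
  ring

lemma pdcd {d : ℕ} {ψ : EucSp d → ℝ} (hψ : ContDiff ℝ 2 ψ) (j : Fin d) :
    ContDiff ℝ 1 (fun y : EucSp d => fderiv ℝ ψ y (EuclideanSpace.single j 1)) :=
  (hψ.fderiv_right (by norm_num)).clm_apply contDiff_const

lemma pd2_exp {d : ℕ} {ψ : EucSp d → ℝ} (hψ : ContDiff ℝ 2 ψ) (a : ℝ) (i j : Fin d) (x : EucSp d) :
    pd2 (fun y => Real.exp (a * ψ y)) i j x =
      a * Real.exp (a * ψ x) * pd2 ψ i j x
        + a ^ 2 * Real.exp (a * ψ x) * pd1 ψ i x * pd1 ψ j x := by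
  unfold pd2
  have hfun : (fun y => fderiv ℝ (fun z => Real.exp (a * ψ z)) y (EuclideanSpace.single j 1))
      = fun y => Real.exp (a * ψ y) * (a * fderiv ℝ ψ y (EuclideanSpace.single j 1)) := by
    funext y
    rw [(hasF hψ a y).fderiv]
    simp only [ContinuousLinearMap.smul_apply, smul_eq_mul]
    try ring
  rw [hfun]
  have hP : HasFDerivAt (fun y => a * fderiv ℝ ψ y (EuclideanSpace.single j 1))
      (a • fderiv ℝ (fun y => fderiv ℝ ψ y (EuclideanSpace.single j 1)) x) x :=
    ((((pdcd hψ j).differentiable one_ne_zero) x).hasFDerivAt).const_mul a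
  have hE := hasF hψ a x
  have h2 : HasFDerivAt (fun y => Real.exp (a * ψ y) * (a * fderiv ℝ ψ y (EuclideanSpace.single j 1))) _ x :=
    hE.mul hP
  rw [h2.fderiv]
  simp [pd1, pd2, smul_smul]
  ring

lemma Lc_exp {d : ℕ} (Sm : Matrix (Fin d) (Fin d) ℝ) (b₀ : EucSp d → EucSp d)
    {ψ : EucSp d → ℝ} (hψ : ContDiff ℝ 2 ψ) (a : ℝ) (x : EucSp d) :
    Lc Sm b₀ (fun y => Real.exp (a * ψ y)) x =
      Real.exp (a * ψ x) * (a * Lc Sm b₀ ψ x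
        + a ^ 2 / 2 * ∑ i, ∑ j, (Sm * Smᵀ) i j * pd1 ψ i x * pd1 ψ j x) := by
  set E := Real.exp (a * ψ x) with hE
  have hA : ∑ i, ∑ j, (Sm * Smᵀ) i j *
        (a * E * pd2 ψ i j x + a ^ 2 * E * pd1 ψ i x * pd1 ψ j x)
      = a * E * (∑ i, ∑ j, (Sm * Smᵀ) i j * pd2 ψ i j x)
        + a ^ 2 * E * (∑ i, ∑ j, (Sm * Smᵀ) i j * pd1 ψ i x * pd1 ψ j x) := by
    rw [Finset.mul_sum, Finset.mul_sum, ← Finset.sum_add_distrib]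
    refine Finset.sum_congr rfl (fun i _ => ?_)
    rw [Finset.mul_sum, Finset.mul_sum, ← Finset.sum_add_distrib]
    exact Finset.sum_congr rfl (fun j _ => by ring)
  have hB : ∑ i, b₀ x i * (a * E * pd1 ψ i x) = a * E * ∑ i, b₀ x i * pd1 ψ i x := by
    rw [Finset.mul_sum]
    exact Finset.sum_congr rfl (fun i _ => by ring)
  unfold Lc
  simp only [pd1_exp hψ a, pd2_exp hψ a, ← hE]
  rw [hA, hB]
  ring
theorem stmt6 (d : ℕ) (hd : 1 ≤ d)
    (Sm : Matrix (Fin d) (Fin d) ℝ) (b₀ : EucSp d → EucSp d)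
    (ψ : EucSp d → ℝ) (hψ : ContDiff ℝ 2 ψ)
    (κ₁ κ₂ R₀ : ℝ) (hκ₁ : 0 < κ₁) (hκ₂ : 0 < κ₂) (hR₀ : 0 < R₀)
    (hdrift : ∀ x : EucSp d, R₀ ≤ ‖x‖ → Lc Sm b₀ ψ x ≤ -κ₁ * ‖x‖ ^ 2)
    (hgrad : ∀ x : EucSp d, Real.sqrt (∑ i, (pd1 ψ i x) ^ 2) ≤ κ₂ * (1 + ‖x‖)) :
    ∃ a : ℝ, 0 < a ∧ ∃ κ₃ : ℝ, 0 < κ₃ ∧ ∃ R₁ : ℝ, R₀ ≤ R₁ ∧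
      ∀ x : EucSp d, R₁ ≤ ‖x‖ →
        Lc Sm b₀ (fun y => Real.exp (a * ψ y)) x ≤
          -κ₃ * ‖x‖ ^ 2 * Real.exp (a * ψ x) := by
  classical
  set A := Sm * Smᵀ with hAdef
  set C : ℝ := ∑ i, ∑ j, |A i j| with hCdef
  have hC : 0 ≤ C :=
    Finset.sum_nonneg fun i _ => Finset.sum_nonneg fun j _ => abs_nonneg _
  set M : ℝ := 4 * (C + 1) * κ₂ ^ 2 with hMdef
  have hM : 0 < M := by positivity
  have ha : 0 < κ₁ / M := by positivity
  refine ⟨κ₁ / M, ha, κ₁ ^ 2 / (2 * M), by positivity, max R₀ 1, le_max_left _ _, ?_⟩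
  intro x hx
  set a := κ₁ / M with hadef
  have hx1 : (1:ℝ) ≤ ‖x‖ := le_trans (le_max_right _ _) hx
  have hx0 : R₀ ≤ ‖x‖ := le_trans (le_max_left _ _) hx
  set S : ℝ := ∑ k, pd1 ψ k x ^ 2 with hSdef
  have hS : 0 ≤ S := Finset.sum_nonneg fun k _ => sq_nonneg _
  have huk : ∀ k, |pd1 ψ k x| ≤ Real.sqrt S := by
    intro k
    rw [← Real.sqrt_sq_eq_abs]
    exact Real.sqrt_le_sqrt
      (Finset.single_le_sum (fun j _ => sq_nonneg (pd1 ψ j x)) (Finset.mem_univ k))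
  set Q : ℝ := ∑ i, ∑ j, A i j * pd1 ψ i x * pd1 ψ j x with hQdef
  have hQ : Q ≤ C * S := by
    rw [hQdef, hCdef, Finset.sum_mul]
    refine Finset.sum_le_sum fun i _ => ?_
    rw [Finset.sum_mul]
    refine Finset.sum_le_sum fun j _ => ?_
    calc A i j * pd1 ψ i x * pd1 ψ j x ≤ |A i j * pd1 ψ i x * pd1 ψ j x| := le_abs_self _
      _ = |A i j| * (|pd1 ψ i x| * |pd1 ψ j x|) := by rw [abs_mul, abs_mul, mul_assoc]
      _ ≤ |A i j| * (Real.sqrt S * Real.sqrt S) :=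
          mul_le_mul_of_nonneg_left
            (mul_le_mul (huk i) (huk j) (abs_nonneg _) (Real.sqrt_nonneg _)) (abs_nonneg _)
      _ = |A i j| * S := by rw [Real.mul_self_sqrt hS]
  have hSle : S ≤ κ₂ ^ 2 * (1 + ‖x‖) ^ 2 := by
    have h2 := pow_le_pow_left₀ (Real.sqrt_nonneg S) (hgrad x) 2
    rwa [Real.sq_sqrt hS, mul_pow] at h2
  have h1x : (1 + ‖x‖) ^ 2 ≤ 4 * ‖x‖ ^ 2 := by nlinarith
  have hQ2 : Q ≤ M * ‖x‖ ^ 2 := by nlinarith [sq_nonneg ‖x‖, sq_nonneg κ₂]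
  have hEpos : (0:ℝ) < Real.exp (a * ψ x) := Real.exp_pos _
  rw [Lc_exp Sm b₀ hψ a x, ← hAdef, ← hQdef,
    show -(κ₁ ^ 2 / (2 * M)) * ‖x‖ ^ 2 * Real.exp (a * ψ x)
      = Real.exp (a * ψ x) * (-(κ₁ ^ 2 / (2 * M)) * ‖x‖ ^ 2) by ring]
  apply mul_le_mul_of_nonneg_left _ hEpos.le
  have hdr := hdrift x hx0
  calc a * Lc Sm b₀ ψ x + a ^ 2 / 2 * Q
      ≤ a * (-κ₁ * ‖x‖ ^ 2) + a ^ 2 / 2 * (M * ‖x‖ ^ 2) :=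
        add_le_add (mul_le_mul_of_nonneg_left hdr ha.le)
          (mul_le_mul_of_nonneg_left hQ2 (by positivity))
    _ = -(κ₁ ^ 2 / (2 * M)) * ‖x‖ ^ 2 := by
        rw [hadef]; field_simp; ring
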